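/- Fix k ≥ 3 and assume μ̂ > 0 satisfies μ̂·ψ'_{k−1}(μ̂) = ψ_{k−1}(μ̂) (the stationarity condition for μ/ψ_{k−1}(μ)). Then μ̂ ≠ k − 2. -/

import Mathlib

open Real

noncomputable def poissonProb (j : ℕ) (μ : ℝ) : ℝ := μ ^ j * Real.exp (-μ) / j.factorial

noncomputable def poissonTail (j : ℕ) (μ : ℝ) : ℝ := ∑' i : ℕ, poissonProb (j + i) μ

theorem stationary_point_ne_k_sub_two (k : ℕ) (hk : 3 ≤ k) (μhat : ℝ) (hμ : 0 < μhat)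
    (hstat : μhat * poissonProb (k - 2) μhat = poissonTail (k - 1) μhat) :
    μhat ≠ (k : ℝ) - 2 := by
  intro heq
  have hk3 : (3:ℝ) ≤ (k:ℝ) := by exact_mod_cast hk
  set μ := μhat with hμdef
  have hμpos : (0:ℝ) < μ := hμ
  have hkpos : (0:ℝ) < (k:ℝ) := by linarith
  have hr : μ / k < 1 := by rw [div_lt_one hkpos, heq]; linarith
  have hr0 : 0 ≤ μ / k := div_nonneg hμpos.le hkpos.le
  set A : ℝ := μ ^ (k-1) * Real.exp (-μ) / (k-1).factorial with hA
  have hApos : 0 < A := by positivity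
  -- factorial bound
  have hk1 : k - 1 + 1 = k := by omega
  have hfact : ∀ i : ℕ, (k-1).factorial * k ^ i ≤ (k-1+i).factorial := by
    intro i
    induction i with
    | zero => simp
    | succ n ih =>
      have h1 : k - 1 + (n+1) = (k - 1 + n) + 1 := by omega
      have h2 : (k - 1 + n) + 1 = k + n := by omega
      calc (k-1).factorial * k ^ (n+1) = (k-1).factorial * k ^ n * k := by ring
        _ ≤ (k-1+n).factorial * k := Nat.mul_le_mul_right _ ih
        _ ≤ (k-1+n).factorial * (k+n) := Nat.mul_le_mul_left _ (Nat.le_add_right _ _)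
        _ = (k+n) * (k-1+n).factorial := Nat.mul_comm _ _
        _ = (k-1+(n+1)).factorial := by rw [h1, Nat.factorial_succ, h2]
  have hterm : ∀ i : ℕ, poissonProb (k-1+i) μ ≤ A * (μ/k)^i := by
    intro i
    have hfR : ((k-1).factorial * k ^ i : ℝ) ≤ ((k-1+i).factorial : ℝ) := by
      exact_mod_cast hfact i
    have hden : (0:ℝ) < ((k-1).factorial * k ^ i : ℝ) := by positivity
    have : poissonProb (k-1+i) μ = μ ^ (k-1) * μ ^ i * Real.exp (-μ) / ((k-1+i).factorial : ℝ) := by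
      rw [poissonProb, pow_add]
    rw [this]
    have hle : μ ^ (k-1) * μ ^ i * Real.exp (-μ) / ((k-1+i).factorial : ℝ)
        ≤ μ ^ (k-1) * μ ^ i * Real.exp (-μ) / ((k-1).factorial * k ^ i : ℝ) := by
      gcongr
    refine hle.trans_eq ?_
    rw [hA, div_pow, mul_div_assoc]
    field_simp
  have hsumA : Summable (fun i : ℕ => A * (μ/k)^i) :=
    (summable_geometric_of_lt_one hr0 hr).mul_left A
  have hsum : Summable (fun i : ℕ => poissonProb (k-1+i) μ) := by
    refine Summable.of_nonneg_of_le (fun i => ?_) hterm hsumA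
    rw [poissonProb]; positivity
  have htail : poissonTail (k-1) μ ≤ A * (1 - μ/k)⁻¹ := by
    rw [poissonTail]
    calc ∑' i : ℕ, poissonProb (k-1+i) μ ≤ ∑' i : ℕ, A * (μ/k)^i :=
          Summable.tsum_le_tsum hterm hsum hsumA
      _ = A * (1 - μ/k)⁻¹ := by
          rw [tsum_mul_left, tsum_geometric_of_lt_one hr0 hr]
  have hlt : A * (1 - μ/k)⁻¹ < μ * poissonProb (k-2) μ := by
    have h2 : k - 2 + 1 = k - 1 := by omega
    have hpow : μ ^ (k-1) = μ ^ (k-2) * μ := by rw [← h2, pow_succ]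
    have hfac : ((k-1).factorial : ℝ) = ((k:ℝ) - 1) * ((k-2).factorial : ℝ) := by
      rw [← h2, Nat.factorial_succ]
      have hc : ((k - 2 : ℕ) : ℝ) = (k:ℝ) - 2 := by
        have hkk : (2:ℕ) ≤ k := by omega
        push_cast [hkk]; ring
      push_cast
      rw [hc]
      ring
    have hgeo : (1 - μ/k)⁻¹ = (k:ℝ) / 2 := by
      rw [heq]; field_simp; ring
    have hP : (0:ℝ) < μ ^ (k-2) := by positivity
    have hE : (0:ℝ) < Real.exp (-μ) := Real.exp_pos _
    have hF : (0:ℝ) < ((k-2).factorial : ℝ) := by positivity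
    have hk1R : (0:ℝ) < (k:ℝ) - 1 := by linarith
    have hL : A * (1 - μ/k)⁻¹
        = (μ ^ (k-2) * μ * Real.exp (-μ) * k) / (2 * (((k:ℝ)-1) * ((k-2).factorial : ℝ))) := by
      rw [hA, hpow, hfac, hgeo]
      field_simp
      try ring
    have hR : μ * poissonProb (k-2) μ
        = (μ * μ ^ (k-2) * Real.exp (-μ)) / (((k-2).factorial : ℝ)) := by
      rw [poissonProb]; ring
    rw [hL, hR, div_lt_div_iff₀ (by positivity) hF]
    nlinarith [mul_pos (mul_pos (mul_pos hP hμpos) hE) hF]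
  have := hstat
  rw [this] at hlt
  exact absurd (htail.trans_lt hlt) (lt_irrefl _)
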